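/- Let p_{X,Y} and p_{X,Z} be binary joint distributions of the form p_{X,Y} = p(0,b,λ) and p_{X,Z} = p(0,b,μ) (i.e., uniform marginal on X and equal marginals on Y and Z). Then P_{X|Y} ≥ P_{X|Z} implies I(X:Y) ≥ I(X:Z), and P_{X|Y} = P_{X|Z} if and only if I(X:Y) = I(X:Z). -/

import Mathlib

noncomputable section

def p00 (a b lam : ℝ) : ℝ := (1 + a + b + lam) / 4
def p01 (a b lam : ℝ) : ℝ := (1 + a - b - lam) / 4
def p10 (a b lam : ℝ) : ℝ := (1 - a + b - lam) / 4
def p11 (a b lam : ℝ) : ℝ := (1 - a - b + lam) / 4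

def pX0 (a : ℝ) : ℝ := (1 + a) / 2
def pX1 (a : ℝ) : ℝ := (1 - a) / 2
def pY0 (b : ℝ) : ℝ := (1 + b) / 2
def pY1 (b : ℝ) : ℝ := (1 - b) / 2

/-- Mutual information of the binary joint distribution `p(a,b,λ)` (natural log). -/
def MI (a b lam : ℝ) : ℝ :=
    p00 a b lam * Real.log (p00 a b lam / (pX0 a * pY0 b))
  + p01 a b lam * Real.log (p01 a b lam / (pX0 a * pY1 b))
  + p10 a b lam * Real.log (p10 a b lam / (pX1 a * pY0 b))
  + p11 a b lam * Real.log (p11 a b lam / (pX1 a * pY1 b))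

/-- Guessing probability of `p(a,b,λ)` (independent of `b`). -/
def Pg (a lam : ℝ) : ℝ := (1 + max |a| |lam|) / 2

def G (x : ℝ) : ℝ := x * Real.log x

lemma term_eq (u v : ℝ) (hu : 0 ≤ u) (hv : 0 ≤ v) (h : v = 0 → u = 0) :
    (u/4) * Real.log ((u/4)/(v/4)) = (u * Real.log u - u * Real.log v)/4 := by
  rcases eq_or_lt_of_le hu with h0 | h0
  · simp [← h0]
  rcases eq_or_lt_of_le hv with hv0 | hv0
  · exact absurd (h hv0.symm) (by linarith)
  have e : (u/4)/(v/4) = u/v := by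
    field_simp
  rw [e, Real.log_div h0.ne' hv0.ne']
  ring

lemma h_strictMono {c : ℝ} (hc : 0 < c) :
    StrictMonoOn (fun t => G (c+t) + G (c-t)) (Set.Icc 0 c) := by
  apply strictMonoOn_of_deriv_pos (convex_Icc 0 c)
  · have : Continuous (fun t => G (c+t) + G (c-t)) := by
      apply Continuous.add
      · exact Real.continuous_mul_log.comp (continuous_const.add continuous_id)
      · exact Real.continuous_mul_log.comp (continuous_const.sub continuous_id)
    exact this.continuousOn
  · intro x hx
    rw [interior_Icc] at hx
    have h1 : 0 < c + x := by linarith [hx.1]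
    have h2 : 0 < c - x := by linarith [hx.2]
    have d1 : HasDerivAt (fun t => G (c+t)) (Real.log (c+x) + 1) x := by
      have := (Real.hasDerivAt_mul_log h1.ne').comp x ((hasDerivAt_id x).const_add c)
      simpa [G, Function.comp_def] using this
    have d2 : HasDerivAt (fun t => G (c-t)) (-(Real.log (c-x) + 1)) x := by
      have := (Real.hasDerivAt_mul_log h2.ne').comp x ((hasDerivAt_id x).const_sub c)
      simpa [G, Function.comp_def] using this
    rw [(have d : HasDerivAt (fun t => G (c+t) + G (c-t)) (Real.log (c+x) + 1 + -(Real.log (c-x) + 1)) x := d1.add d2; d.deriv)]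
    have : Real.log (c - x) < Real.log (c + x) := Real.log_lt_log h2 (by linarith [hx.1])
    linarith

def MIc (b lam : ℝ) : ℝ :=
  (G (1+b+lam) + G (1+b-lam) + G (1-b+lam) + G (1-b-lam) - 2*G (1+b) - 2*G (1-b))/4

lemma MIc_neg (b lam : ℝ) : MIc b (-lam) = MIc b lam := by
  simp only [MIc]
  rw [show 1+b+(-lam) = 1+b-lam by ring, show 1+b-(-lam) = 1+b+lam by ring,
    show 1-b+(-lam) = 1-b-lam by ring, show 1-b-(-lam) = 1-b+lam by ring]
  ring

lemma MIc_abs (b lam : ℝ) : MIc b |lam| = MIc b lam := by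
  rcases abs_cases lam with ⟨h, _⟩ | ⟨h, _⟩
  · rw [h]
  · rw [h, MIc_neg]

lemma MIc_mono (b : ℝ) (hb : |b| < 1) : StrictMonoOn (MIc b) (Set.Icc 0 (1 - |b|)) := by
  intro x hx y hy hxy
  have hb1 : -b ≤ |b| := neg_le_abs b
  have hb2 : b ≤ |b| := le_abs_self b
  have c1 : (0:ℝ) < 1 + b := by linarith
  have c2 : (0:ℝ) < 1 - b := by linarith
  have m1x : x ∈ Set.Icc 0 (1+b) := ⟨hx.1, by linarith [hx.2]⟩
  have m1y : y ∈ Set.Icc 0 (1+b) := ⟨hy.1, by linarith [hy.2]⟩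
  have m2x : x ∈ Set.Icc 0 (1-b) := ⟨hx.1, by linarith [hx.2]⟩
  have m2y : y ∈ Set.Icc 0 (1-b) := ⟨hy.1, by linarith [hy.2]⟩
  have s1 := h_strictMono c1 m1x m1y hxy
  have s2 := h_strictMono c2 m2x m2y hxy
  simp only at s1 s2
  simp only [MIc]
  linarith

lemma mi_eq (b lam : ℝ)
    (h1 : 0 ≤ p00 0 b lam) (h2 : 0 ≤ p01 0 b lam)
    (h3 : 0 ≤ p10 0 b lam) (h4 : 0 ≤ p11 0 b lam) :
    MI 0 b lam = MIc b lam := by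
  have a1 : (0:ℝ) ≤ 1+b+lam := by have := h1; simp only [p00] at this; linarith
  have a2 : (0:ℝ) ≤ 1-b-lam := by have := h2; simp only [p01] at this; linarith
  have a3 : (0:ℝ) ≤ 1+b-lam := by have := h3; simp only [p10] at this; linarith
  have a4 : (0:ℝ) ≤ 1-b+lam := by have := h4; simp only [p11] at this; linarith
  have e1 := term_eq (1+b+lam) (1+b) a1 (by linarith) (fun hv => by linarith)
  have e2 := term_eq (1-b-lam) (1-b) a2 (by linarith) (fun hv => by linarith)
  have e3 := term_eq (1+b-lam) (1+b) a3 (by linarith) (fun hv => by linarith)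
  have e4 := term_eq (1-b+lam) (1-b) a4 (by linarith) (fun hv => by linarith)
  have q00 : p00 0 b lam = (1+b+lam)/4 := by simp only [p00]; ring
  have q01 : p01 0 b lam = (1-b-lam)/4 := by simp only [p01]; ring
  have q10 : p10 0 b lam = (1+b-lam)/4 := by simp only [p10]; ring
  have q11 : p11 0 b lam = (1-b+lam)/4 := by simp only [p11]; ring
  have r0 : pX0 0 * pY0 b = (1+b)/4 := by simp only [pX0, pY0]; ring
  have r1 : pX0 0 * pY1 b = (1-b)/4 := by simp only [pX0, pY1]; ring
  have r2 : pX1 0 * pY0 b = (1+b)/4 := by simp only [pX1, pY0]; ring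
  have r3 : pX1 0 * pY1 b = (1-b)/4 := by simp only [pX1, pY1]; ring
  simp only [MI, q00, q01, q10, q11, r0, r1, r2, r3, e1, e2, e3, e4, MIc, G]
  ring

theorem monotonicity_uniform_x (b lam mu : ℝ)
    (h1 : 0 ≤ p00 0 b lam) (h2 : 0 ≤ p01 0 b lam)
    (h3 : 0 ≤ p10 0 b lam) (h4 : 0 ≤ p11 0 b lam)
    (h1' : 0 ≤ p00 0 b mu) (h2' : 0 ≤ p01 0 b mu)
    (h3' : 0 ≤ p10 0 b mu) (h4' : 0 ≤ p11 0 b mu) :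
    (Pg 0 mu ≤ Pg 0 lam → MI 0 b mu ≤ MI 0 b lam) ∧
    (Pg 0 lam = Pg 0 mu ↔ MI 0 b lam = MI 0 b mu) := by
  have a1 : (0:ℝ) ≤ 1+b+lam := by have := h1; simp only [p00] at this; linarith
  have a2 : (0:ℝ) ≤ 1-b-lam := by have := h2; simp only [p01] at this; linarith
  have a3 : (0:ℝ) ≤ 1+b-lam := by have := h3; simp only [p10] at this; linarith
  have a4 : (0:ℝ) ≤ 1-b+lam := by have := h4; simp only [p11] at this; linarith
  have a1' : (0:ℝ) ≤ 1+b+mu := by have := h1'; simp only [p00] at this; linarith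
  have a2' : (0:ℝ) ≤ 1-b-mu := by have := h2'; simp only [p01] at this; linarith
  have a3' : (0:ℝ) ≤ 1+b-mu := by have := h3'; simp only [p10] at this; linarith
  have a4' : (0:ℝ) ≤ 1-b+mu := by have := h4'; simp only [p11] at this; linarith
  have hbl : |b| + |lam| ≤ 1 := by
    rcases abs_cases b with ⟨eb, _⟩ | ⟨eb, _⟩ <;> rcases abs_cases lam with ⟨el, _⟩ | ⟨el, _⟩ <;>
      rw [eb, el] <;> linarith
  have hbm : |b| + |mu| ≤ 1 := by
    rcases abs_cases b with ⟨eb, _⟩ | ⟨eb, _⟩ <;> rcases abs_cases mu with ⟨el, _⟩ | ⟨el, _⟩ <;>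
      rw [eb, el] <;> linarith
  have miL : MI 0 b lam = MIc b |lam| := (mi_eq b lam h1 h2 h3 h4).trans (MIc_abs b lam).symm
  have miM : MI 0 b mu = MIc b |mu| := (mi_eq b mu h1' h2' h3' h4').trans (MIc_abs b mu).symm
  have pgL : Pg 0 lam = (1 + |lam|)/2 := by
    simp [Pg, max_eq_right (abs_nonneg lam)]
  have pgM : Pg 0 mu = (1 + |mu|)/2 := by
    simp [Pg, max_eq_right (abs_nonneg mu)]
  by_cases hb : |b| < 1
  · have mono := MIc_mono b hb
    have memL : |lam| ∈ Set.Icc 0 (1 - |b|) := ⟨abs_nonneg lam, by linarith⟩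
    have memM : |mu| ∈ Set.Icc 0 (1 - |b|) := ⟨abs_nonneg mu, by linarith⟩
    constructor
    · intro hPg
      have hml : |mu| ≤ |lam| := by rw [pgL, pgM] at hPg; linarith
      rw [miL, miM]
      exact mono.monotoneOn memM memL hml
    · constructor
      · intro hPg
        have : |lam| = |mu| := by rw [pgL, pgM] at hPg; linarith
        rw [miL, miM, this]
      · intro hMI
        rw [pgL, pgM]
        rcases lt_trichotomy |lam| |mu| with h | h | h
        · exact absurd (miL.symm ▸ miM.symm ▸ hMI) (ne_of_lt (mono memL memM h))
        · rw [h]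
        · exact absurd (miL.symm ▸ miM.symm ▸ hMI).symm (ne_of_lt (mono memM memL h))
  · have hlam : lam = 0 := by
      have : |lam| ≤ 0 := by push_neg at hb; linarith
      exact abs_eq_zero.mp (le_antisymm this (abs_nonneg lam))
    have hmu : mu = 0 := by
      have : |mu| ≤ 0 := by push_neg at hb; linarith
      exact abs_eq_zero.mp (le_antisymm this (abs_nonneg mu))
    subst hlam; subst hmu
    exact ⟨fun _ => le_refl _, iff_of_true rfl rfl⟩
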